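/- Let γ and Γ be n×n complex Hermitian matrices with γ² = 1, Γ² = 1, and γ Γ = - Γ γ, and let H be an invertible Hermitian matrix satisfying the chiral symmetry relation Γ H Γ = -H. Then the unitary operator V = γ · sgn(H) satisfies Γ V Γ = V. -/

import Mathlib

open Matrix
open scoped ComplexOrder

/-- The positive semidefinite square root of a positive semidefinite matrix (as defined in
Mathlib of December 2024, since removed). -/
noncomputable def Matrix.PosSemidef.sqrt {n : Type*} [Fintype n] [DecidableEq n] {𝕜 : Type*}
    [RCLike 𝕜] {A : Matrix n n 𝕜} (hA : A.PosSemidef) : Matrix n n 𝕜 :=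
  hA.1.eigenvectorUnitary.1 * diagonal ((↑) ∘ (√·) ∘ hA.1.eigenvalues) *
  (star hA.1.eigenvectorUnitary : Matrix n n 𝕜)

section
open scoped MatrixOrder

theorem Matrix.PosSemidef.sqrt_eq_cfcSqrt {n : Type*} [Fintype n] [DecidableEq n] {𝕜 : Type*}
    [RCLike 𝕜] {A : Matrix n n 𝕜} (hA : A.PosSemidef) : hA.sqrt = CFC.sqrt A := by
  rw [CFC.sqrt_eq_cfc, cfc_nnreal_eq_real _ A, hA.1.cfc_eq]
  rw [Matrix.IsHermitian.cfc, Unitary.conjStarAlgAut_apply]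
  unfold Matrix.PosSemidef.sqrt
  congr 3
  funext i
  simp only [Function.comp_apply, Real.coe_sqrt, Real.coe_toNNReal _ (hA.eigenvalues_nonneg i)]

theorem Matrix.PosSemidef.posSemidef_sqrt {n : Type*} [Fintype n] [DecidableEq n] {𝕜 : Type*}
    [RCLike 𝕜] {A : Matrix n n 𝕜} (hA : A.PosSemidef) : hA.sqrt.PosSemidef := by
  rw [hA.sqrt_eq_cfcSqrt]; exact (CFC.sqrt_nonneg A).posSemidef

theorem Matrix.PosSemidef.sqrt_mul_self {n : Type*} [Fintype n] [DecidableEq n] {𝕜 : Type*}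
    [RCLike 𝕜] {A : Matrix n n 𝕜} (hA : A.PosSemidef) : hA.sqrt * hA.sqrt = A := by
  rw [hA.sqrt_eq_cfcSqrt]; exact CFC.sqrt_mul_sqrt_self A hA.nonneg

theorem Matrix.PosSemidef.eq_sqrt_of_sq_eq {n : Type*} [Fintype n] [DecidableEq n] {𝕜 : Type*}
    [RCLike 𝕜] {B : Matrix n n 𝕜} (hB : B.PosSemidef) {A : Matrix n n 𝕜} (hA : A.PosSemidef)
    (hBA : B ^ 2 = A) : B = hA.sqrt := by
  rw [hA.sqrt_eq_cfcSqrt]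
  exact (CFC.sqrt_unique (by rw [← sq]; exact hBA) hB.nonneg).symm

end

/-- The matrix sign `sgn H = H * (√(H²))⁻¹` of a Hermitian matrix, where `√(H²)` is the
positive semidefinite square root of `H²`. -/
noncomputable def matrixSign {n : ℕ} (H : Matrix (Fin n) (Fin n) ℂ) (hH : H.IsHermitian) :
    Matrix (Fin n) (Fin n) ℂ :=
  H * ((show (H * H).PosSemidef by
      simpa [hH.eq] using Matrix.posSemidef_conjTranspose_mul_self H).sqrt)⁻¹

theorem stmt_9 {n : ℕ} (γ Γ : Matrix (Fin n) (Fin n) ℂ)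
    (hγ : γ.IsHermitian) (hΓ : Γ.IsHermitian) (hγ2 : γ * γ = 1) (hΓ2 : Γ * Γ = 1)
    (hanti : γ * Γ = - (Γ * γ))
    (H : Matrix (Fin n) (Fin n) ℂ) (hH : H.IsHermitian) (hHinv : IsUnit H.det)
    (hchiral : Γ * H * Γ = -H)
    (V : Matrix (Fin n) (Fin n) ℂ) (hV : V = γ * matrixSign H hH) :
    Γ * V * Γ = V := by
  have hP : (H * H).PosSemidef := by
    simpa [hH.eq] using Matrix.posSemidef_conjTranspose_mul_self H
  set S : Matrix (Fin n) (Fin n) ℂ := hP.sqrt with hSdef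
  -- Γ H² Γ = H²
  have hH2 : Γ * (H * H) * Γ = H * H := by
    have h1 : Γ * (H * H) * Γ = Γ * H * (Γ * Γ) * H * Γ := by
      rw [hΓ2]; noncomm_ring
    have h2 : Γ * H * (Γ * Γ) * H * Γ = (Γ * H * Γ) * (Γ * H * Γ) := by noncomm_ring
    rw [h1, h2, hchiral, neg_mul_neg]
  have hΓinv : Γ⁻¹ = Γ := inv_eq_left_inv hΓ2
  have hconjPSD : (Γ * S * Γ).PosSemidef := by
    have := hP.posSemidef_sqrt.mul_mul_conjTranspose_same Γ
    simpa [hΓ.eq, mul_assoc] using this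
  have hsq : (Γ * S * Γ) ^ 2 = H * H := by
    have h1 : (Γ * S * Γ) ^ 2 = Γ * S * (Γ * Γ) * S * Γ := by
      rw [pow_two]; noncomm_ring
    have h2 : Γ * S * (1 : Matrix (Fin n) (Fin n) ℂ) * S * Γ = Γ * (S * S) * Γ := by
      noncomm_ring
    rw [h1, hΓ2, h2, hP.sqrt_mul_self, hH2]
  have hcomm : Γ * S * Γ = S := hconjPSD.eq_sqrt_of_sq_eq hP hsq
  have hinv : Γ * S⁻¹ * Γ = S⁻¹ := by
    have := congrArg (·⁻¹) hcomm
    simpa [Matrix.mul_inv_rev, hΓinv, mul_assoc] using this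
  have hΓγ : Γ * γ = -(γ * Γ) := by rw [hanti, neg_neg]
  have hγΓΓ : Γ * γ * Γ = -γ := by
    rw [hΓγ, neg_mul, mul_assoc, hΓ2, mul_one]
  have key : Γ * (γ * (H * S⁻¹)) * Γ = γ * (H * S⁻¹) := by
    have e1 : Γ * (γ * (H * S⁻¹)) * Γ
        = (Γ * γ * Γ) * ((Γ * H * Γ) * (Γ * S⁻¹ * Γ)) := by
      have a1 : (Γ * γ * Γ) * ((Γ * H * Γ) * (Γ * S⁻¹ * Γ))
          = Γ * γ * (Γ * Γ) * H * (Γ * Γ) * S⁻¹ * Γ := by noncomm_ring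
      rw [a1, hΓ2]
      noncomm_ring
    rw [e1, hchiral, hinv, hγΓΓ]; noncomm_ring
  rw [hV]
  show Γ * (γ * (H * S⁻¹)) * Γ = γ * (H * S⁻¹)
  exact key
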